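/- Let F be the free group on generators a_1, ..., a_n and let w = a_{i_1} ⋯ a_{i_k} be a word (a finite list of generators, no inverses). For a subset S ⊆ {a_1, ..., a_n}, call a word S-connected if the positions of letters belonging to S form a contiguous interval (all letters between the first and last occurrence of a letter of S are in S). Then for every word w and every nonempty S, there exists an S-connected word w_⋆ such that: (1) the subsequence of letters of w_⋆ lying in S equals the subsequence of letters of w lying in S (in the same order); (2) w_⋆ and w represent the same element of F (where commutator symbols in w_⋆ are interpreted as group commutators); (3) every letter of w_⋆ is either a letter of w or a commutator [x, y] of products of letters of w. -/

import Mathlib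

/-- The letter `x` is (the image in the free group of) a generator belonging to `S`. -/
def inS {n : ℕ} (S : Finset (Fin n)) (x : FreeGroup (Fin n)) : Prop :=
  ∃ i ∈ S, x = FreeGroup.of i

/-- `u` is a product of letters of the word `w`. -/
def isProdOfLetters {n : ℕ} (w : List (Fin n)) (u : FreeGroup (Fin n)) : Prop :=
  ∃ l : List (Fin n), (∀ a ∈ l, a ∈ w) ∧ u = (l.map FreeGroup.of).prod

open commutatorElement in
lemma commutator_ne_of {n : ℕ} (u v : FreeGroup (Fin n)) (i : Fin n) :
    ⁅u, v⁆ ≠ FreeGroup.of i := by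
  intro h
  set f : FreeGroup (Fin n) →* Multiplicative ℤ :=
    FreeGroup.lift (fun _ => Multiplicative.ofAdd 1) with hf
  have h1 : f ⁅u, v⁆ = 1 := by
    rw [map_commutatorElement]
    exact commutatorElement_eq_one_iff_commute.2 (Commute.all _ _)
  have h2 : f (FreeGroup.of i) = Multiplicative.ofAdd 1 := by
    simp [hf]
  rw [h, h2] at h1
  simpa using h1

lemma inS_of_iff {n : ℕ} (S : Finset (Fin n)) (i : Fin n) :
    inS S (FreeGroup.of i) ↔ i ∈ S := by
  constructor
  · rintro ⟨j, hj, h⟩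
    rwa [FreeGroup.of_injective h]
  · intro h; exact ⟨i, h, rfl⟩

open commutatorElement in
lemma key {n : ℕ} (S : Finset (Fin n)) (w : List (Fin n)) :
    ∃ N T : List (FreeGroup (Fin n)),
      (∀ x ∈ N, ¬ inS S x) ∧
      (∀ x ∈ N, (∃ i ∈ w, x = FreeGroup.of i) ∨
        ∃ u v : FreeGroup (Fin n), isProdOfLetters w u ∧ isProdOfLetters w v ∧ x = ⁅u, v⁆) ∧
      T = (w.filter (· ∈ S)).map FreeGroup.of ∧
      (N ++ T).prod = (w.map FreeGroup.of).prod := by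
  induction w using List.reverseRecOn with
  | nil => exact ⟨[], [], by simp, by simp, by simp, by simp⟩
  | append_singleton w a ih =>
    obtain ⟨N, T, hNS, hNlet, hT, hprod⟩ := ih
    have hmono : ∀ x, (∃ i ∈ w, x = FreeGroup.of i) ∨
        (∃ u v : FreeGroup (Fin n), isProdOfLetters w u ∧ isProdOfLetters w v ∧ x = ⁅u, v⁆) →
        (∃ i ∈ w ++ [a], x = FreeGroup.of i) ∨
        (∃ u v : FreeGroup (Fin n), isProdOfLetters (w ++ [a]) u ∧
          isProdOfLetters (w ++ [a]) v ∧ x = ⁅u, v⁆) := by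
      rintro x (⟨i, hi, rfl⟩ | ⟨u, v, ⟨lu, hlu, rfl⟩, ⟨lv, hlv, rfl⟩, rfl⟩)
      · exact Or.inl ⟨i, by simp [hi], rfl⟩
      · exact Or.inr ⟨_, _, ⟨lu, fun b hb => by simp [hlu b hb], rfl⟩,
          ⟨lv, fun b hb => by simp [hlv b hb], rfl⟩, rfl⟩
    by_cases ha : a ∈ S
    · refine ⟨N, T ++ [FreeGroup.of a], hNS, fun x hx => hmono x (Or.imp id id (hNlet x hx)), ?_, ?_⟩
      · rw [hT, List.filter_append]
        simp [ha]
      · simp only [List.prod_append] at hprod ⊢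
        rw [← mul_assoc, hprod]
        simp
    · refine ⟨N ++ [⁅T.prod, FreeGroup.of a⁆, FreeGroup.of a], T, ?_, ?_, ?_, ?_⟩
      · intro x hx
        rcases List.mem_append.1 hx with h | h
        · exact hNS x h
        · simp only [List.mem_cons, List.mem_singleton, List.not_mem_nil, or_false] at h
          rcases h with rfl | rfl
          · rintro ⟨i, _, hi⟩
            exact commutator_ne_of _ _ i hi
          · rintro ⟨i, hiS, hi⟩
            exact ha (by rwa [FreeGroup.of_injective hi])
      · intro x hx
        rcases List.mem_append.1 hx with h | h
        · exact hmono x (Or.imp id id (hNlet x h))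
        · simp only [List.mem_cons, List.mem_singleton, List.not_mem_nil, or_false] at h
          rcases h with rfl | rfl
          · refine Or.inr ⟨T.prod, FreeGroup.of a, ?_, ?_, rfl⟩
            · refine ⟨w.filter (· ∈ S), fun b hb => by simp [List.mem_filter.1 hb |>.1], ?_⟩
              rw [hT]
            · exact ⟨[a], by simp, by simp⟩
          · exact Or.inl ⟨a, by simp, rfl⟩
      · rw [hT, List.filter_append]
        simp [ha]
      · simp only [List.prod_append, List.map_append, List.prod_cons, List.prod_nil,
          List.map_cons, List.map_nil, mul_one] at hprod ⊢
        rw [← hprod, commutatorElement_def]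
        group

open Classical commutatorElement in
/-- for every word `w` over the generators and every nonempty `S`, there is an
`S`-connected word `w⋆` (a list `L` of group elements, each a letter of `w` or a commutator of
products of letters of `w`) whose `S`-letters form a contiguous block, appear in the same
order as in `w`, and whose product equals that of `w`. -/
theorem stmt_7 {n : ℕ} (w : List (Fin n)) (S : Finset (Fin n)) (hS : S.Nonempty) :
    ∃ L : List (FreeGroup (Fin n)),
      (∀ i j k : Fin L.length, i ≤ j → j ≤ k →
        inS S (L.get i) → inS S (L.get k) → inS S (L.get j)) ∧
      L.filter (fun x => decide (inS S x)) =
        (w.map FreeGroup.of).filter (fun x => decide (inS S x)) ∧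
      L.prod = (w.map FreeGroup.of).prod ∧
      (∀ x ∈ L, (∃ i ∈ w, x = FreeGroup.of i) ∨
        ∃ u v : FreeGroup (Fin n), isProdOfLetters w u ∧ isProdOfLetters w v ∧ x = ⁅u, v⁆) := by
  obtain ⟨N, T, hNS, hNlet, hT, hprod⟩ := key S w
  have hTin : ∀ x ∈ T, inS S x := by
    intro x hx
    rw [hT] at hx
    obtain ⟨i, hi, rfl⟩ := List.mem_map.1 hx
    exact ⟨i, by simpa using (List.mem_filter.1 hi).2, rfl⟩
  refine ⟨N ++ T, ?_, ?_, hprod, ?_⟩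
  · intro i j k hij hjk hi hk
    have hi' : N.length ≤ (i : ℕ) := by
      by_contra h
      push_neg at h
      have : (N ++ T).get i ∈ N := by
        rw [List.get_eq_getElem, List.getElem_append_left h]
        exact List.getElem_mem h
      exact hNS _ this hi
    have hj' : N.length ≤ (j : ℕ) := le_trans hi' hij
    have : (N ++ T).get j ∈ T := by
      rw [List.get_eq_getElem, List.getElem_append_right hj']
      exact List.getElem_mem _
    exact hTin _ this
  · rw [List.filter_append]
    have h1 : N.filter (fun x => decide (inS S x)) = [] := by
      rw [List.filter_eq_nil_iff]
      intro x hx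
      simpa using hNS x hx
    have h2 : T.filter (fun x => decide (inS S x)) = T := by
      rw [List.filter_eq_self]
      intro x hx
      simpa using hTin x hx
    rw [h1, h2, List.nil_append, hT, List.filter_map]
    congr 1
    apply List.filter_congr
    intro i _
    simp [Function.comp, inS_of_iff]
  · intro x hx
    rcases List.mem_append.1 hx with h | h
    · exact hNlet x h
    · rw [hT] at h
      obtain ⟨i, hi, rfl⟩ := List.mem_map.1 h
      exact Or.inl ⟨i, (List.mem_filter.1 hi).1, rfl⟩
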